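/- arXiv:1509.00447 — 4 statements merged into one kernel-verified Lean document; each statement's English description precedes it below -/
import Mathlib

section
/- The set of nonempty compact star-shaped subsets of ℝ^m is closed in the space of nonempty compact subsets of ℝ^m equipped with the Hausdorff metric. That is, if K_n are nonempty compact star-shaped sets converging in Hausdorff distance to a nonempty compact set K, then K is star-shaped. -/
open Metric Set MeasureTheory Filter

noncomputable section

/-- `Em m` is the Euclidean space ℝ^m. -/
abbrev Em (m : ℕ) := EuclideanSpace ℝ (Fin m)

/-- A set is star-shaped if it contains a point `x` such that the segment from `x`
to any point of the set lies in the set. -/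
def StarShaped {m : ℕ} (K : Set (Em m)) : Prop :=
  ∃ x ∈ K, ∀ y ∈ K, segment ℝ x y ⊆ K

/-- The kernel of a set: all points seeing the whole set. -/
def kern {m : ℕ} (K : Set (Em m)) : Set (Em m) :=
  {x | x ∈ K ∧ ∀ y ∈ K, segment ℝ x y ⊆ K}

/-- Kuratowski upper limit of a sequence of sets. -/
def KLimsup {m : ℕ} (C : ℕ → Set (Em m)) : Set (Em m) :=
  ⋂ n : ℕ, closure (⋃ k : ℕ, ⋃ _ : n ≤ k, C k)

/-- Kuratowski lower limit of a sequence of sets. -/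
def KLiminf {m : ℕ} (C : ℕ → Set (Em m)) : Set (Em m) :=
  {x | ∃ f : ℕ → Em m, (∀ n, f n ∈ C n) ∧ Tendsto f atTop (nhds x)}

/-- The α-cut of a fuzzy set `u`, for α > 0. -/
def acut {m : ℕ} (u : Em m → ℝ) (a : ℝ) : Set (Em m) := {x | a ≤ u x}

/-- The support (0-cut) of a fuzzy set. -/
def fsupp {m : ℕ} (u : Em m → ℝ) : Set (Em m) := closure {x | 0 < u x}

/-- Membership in `F_B(ℝ^m)^p`: normal, upper semi-continuous fuzzy sets with
compact α-cuts for α ∈ (0,1] and α ↦ H([u]_α, {0})^p integrable on (0,1]. -/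
structure IsFuzzyBp {m : ℕ} (p : ℝ) (u : Em m → ℝ) : Prop where
  mem01 : ∀ x, u x ∈ Icc (0:ℝ) 1
  normal : ∃ x, u x = 1
  usc : UpperSemicontinuous u
  compactCuts : ∀ a ∈ Ioc (0:ℝ) 1, IsCompact (acut u a)
  lp : IntegrableOn (fun a => hausdorffDist (acut u a) ({0} : Set (Em m)) ^ p)
        (Ioc (0:ℝ) 1)

/-- Membership in `F_B(ℝ^m)`: normal, upper semi-continuous fuzzy sets with
bounded (hence compact closed) support. -/
structure IsFuzzyB {m : ℕ} (u : Em m → ℝ) : Prop where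
  mem01 : ∀ x, u x ∈ Icc (0:ℝ) 1
  normal : ∃ x, u x = 1
  usc : UpperSemicontinuous u
  bddSupp : Bornology.IsBounded {x | 0 < u x}

/-- The `d_p` metric on fuzzy sets. -/
def dp {m : ℕ} (p : ℝ) (u v : Em m → ℝ) : ℝ :=
  (∫ a in Ioc (0:ℝ) 1, hausdorffDist (acut u a) (acut v a) ^ p) ^ (1/p)

/-- `d_p` distance to the crisp origin `0̂`. -/
def dpOrigin {m : ℕ} (p : ℝ) (u : Em m → ℝ) : ℝ :=
  (∫ a in Ioc (0:ℝ) 1, hausdorffDist (acut u a) ({0} : Set (Em m)) ^ p) ^ (1/p)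

/-- Uniformly p-mean bounded family. -/
def UPMB {m : ℕ} (p : ℝ) (U : Set (Em m → ℝ)) : Prop :=
  ∃ M : ℝ, ∀ u ∈ U, dpOrigin p u ≤ M

/-- p-mean equi-left-continuous family. -/
def PMELC {m : ℕ} (p : ℝ) (U : Set (Em m → ℝ)) : Prop :=
  ∀ ε > (0:ℝ), ∃ δ > (0:ℝ), ∀ h : ℝ, 0 ≤ h → h < δ → ∀ u ∈ U,
    (∫ a in Ioc h 1, hausdorffDist (acut u a) (acut u (a - h)) ^ p) ^ (1/p) < ε

/-- Truncation `u^{(a)}` of a fuzzy set at level `a`. -/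
def ftrunc {m : ℕ} (u : Em m → ℝ) (a : ℝ) : Em m → ℝ :=
  fun x => if a ≤ u x then u x else 0

/-- The kernel of a fuzzy set: intersection of the kernels of its cuts. -/
def fker {m : ℕ} (u : Em m → ℝ) : Set (Em m) :=
  ⋂ a ∈ Ioc (0:ℝ) 1, kern (acut u a)

/-- The full cut-family of a fuzzy set, with the 0-cut being the support. -/
def cutF {m : ℕ} (u : Em m → ℝ) (a : ℝ) : Set (Em m) :=
  if a = 0 then fsupp u else acut u a

/-- Conditions (i)–(iv) of the representation theorem for `F_B(ℝ^m)^p`. -/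
def GoodFamily {m : ℕ} (p : ℝ) (v : ℝ → Set (Em m)) : Prop :=
  (∀ l ∈ Ioc (0:ℝ) 1, (v l).Nonempty ∧ IsCompact (v l)) ∧
  (∀ l ∈ Ioc (0:ℝ) 1, v l = ⋂ g ∈ Ico (0:ℝ) l, v g) ∧
  (v 0 = closure (⋃ g ∈ Ioc (0:ℝ) 1, v g)) ∧
  IntegrableOn (fun a => hausdorffDist (v a) ({0} : Set (Em m)) ^ p) (Ioc (0:ℝ) 1)


/-- The nonempty compact star-shaped sets are closed under
Hausdorff convergence among nonempty compact sets. -/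
theorem starShaped_closed_under_hausdorff {m : ℕ}
    (K : ℕ → Set (Em m)) (L : Set (Em m))
    (hKne : ∀ n, (K n).Nonempty) (hKc : ∀ n, IsCompact (K n))
    (hKs : ∀ n, StarShaped (K n))
    (hLne : L.Nonempty) (hLc : IsCompact L)
    (h : Tendsto (fun n => hausdorffDist (K n) L) atTop (nhds 0)) :
    StarShaped L := by
  classical
  choose x hxK hxker using hKs
  have hedist : ∀ n, EMetric.hausdorffEdist (K n) L ≠ ⊤ := fun n =>
    Metric.hausdorffEdist_ne_top_of_nonempty_of_bounded (hKne n) hLne (hKc n).isBounded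
      hLc.isBounded
  have hx_infDist : Tendsto (fun n => Metric.infDist (x n) L) atTop (nhds 0) := by
    refine squeeze_zero (fun n => Metric.infDist_nonneg) (fun n => ?_) h
    exact Metric.infDist_le_hausdorffDist_of_mem (hxK n) (hedist n)
  choose p hpL hp_eq using fun n => hLc.exists_infDist_eq_dist hLne (x n)
  have hdxp : Tendsto (fun n => dist (x n) (p n)) atTop (nhds 0) := by
    simpa [hp_eq] using hx_infDist
  obtain ⟨x0, hx0L, φ, hφ, hpφ⟩ := hLc.tendsto_subseq hpL
  have hxφ : Tendsto (fun n => x (φ n)) atTop (nhds x0) := by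
    rw [tendsto_iff_dist_tendsto_zero]
    refine squeeze_zero (fun n => dist_nonneg) (fun n => dist_triangle _ (p (φ n)) _) ?_
    have h1 : Tendsto (fun n => dist (x (φ n)) (p (φ n))) atTop (nhds 0) :=
      hdxp.comp hφ.tendsto_atTop
    have h2 : Tendsto (fun n => dist (p (φ n)) x0) atTop (nhds 0) :=
      tendsto_iff_dist_tendsto_zero.1 hpφ
    simpa using h1.add h2
  refine ⟨x0, hx0L, ?_⟩
  intro y hyL z hz
  obtain ⟨a, b, ha, hb, hab, rfl⟩ := hz
  choose q hqK hq_eq using fun n => (hKc n).exists_infDist_eq_dist (hKne n) y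
  have hyq : Tendsto q atTop (nhds y) := by
    rw [tendsto_iff_dist_tendsto_zero]
    refine squeeze_zero (fun n => dist_nonneg) (fun n => ?_) h
    rw [dist_comm, ← hq_eq n]
    rw [Metric.hausdorffDist_comm]
    have hne : EMetric.hausdorffEdist L (K n) ≠ ⊤ := by
      exact (hausdorffEDist_comm (s := L) (t := K n)).trans_ne (hedist n)
    exact Metric.infDist_le_hausdorffDist_of_mem hyL hne
  have hz_mem : ∀ n, a • x (φ n) + b • q (φ n) ∈ K (φ n) := fun n =>
    hxker (φ n) (q (φ n)) (hqK (φ n)) ⟨a, b, ha, hb, hab, rfl⟩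
  have hz_tend : Tendsto (fun n => a • x (φ n) + b • q (φ n)) atTop
      (nhds (a • x0 + b • y)) :=
    (hxφ.const_smul a).add ((hyq.comp hφ.tendsto_atTop).const_smul b)
  have hzero : Metric.infDist (a • x0 + b • y) L = 0 := by
    have h1 : Tendsto (fun n => Metric.infDist (a • x (φ n) + b • q (φ n)) L) atTop
        (nhds (Metric.infDist (a • x0 + b • y) L)) :=
      ((Metric.continuous_infDist_pt L).continuousAt).tendsto.comp hz_tend
    have h2 : Tendsto (fun n => Metric.infDist (a • x (φ n) + b • q (φ n)) L) atTop
        (nhds 0) := by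
      refine squeeze_zero (fun n => Metric.infDist_nonneg) (fun n => ?_)
        (h.comp hφ.tendsto_atTop)
      exact Metric.infDist_le_hausdorffDist_of_mem (hz_mem n) (hedist (φ n))
    exact tendsto_nhds_unique h1 h2
  exact (hLc.isClosed.mem_iff_infDist_zero hLne).2 hzero

end
end

section
/- Let u_n, u be nonempty compact star-shaped subsets of ℝ^m with H(u_n, u) → 0 in the Hausdorff metric. Then the Kuratowski upper limit of the kernels, limsup_{n→∞} ker u_n = ⋂_{n≥1} closure(⋃_{m≥n} ker u_m), is contained in ker u. -/
open Metric Set MeasureTheory Filter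

noncomputable section

/-- If star-shaped compacts `u n` converge to `u` in Hausdorff
distance, then the Kuratowski upper limit of the kernels is contained in `ker u`. -/
theorem limsup_kernels_subset_kernel {m : ℕ}
    (u : ℕ → Set (Em m)) (v : Set (Em m))
    (hune : ∀ n, (u n).Nonempty) (huc : ∀ n, IsCompact (u n))
    (hus : ∀ n, StarShaped (u n))
    (hvne : v.Nonempty) (hvc : IsCompact v) (hvs : StarShaped v)
    (h : Tendsto (fun n => hausdorffDist (u n) v) atTop (nhds 0)) :
    KLimsup (fun n => kern (u n)) ⊆ kern v := by
  intro x hx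
  have hne : ∀ n, EMetric.hausdorffEdist (u n) v ≠ ⊤ := fun n =>
    Metric.hausdorffEdist_ne_top_of_nonempty_of_bounded (hune n) hvne
      (huc n).isBounded hvc.isBounded
  have key : ∀ y ∈ v, ∀ z ∈ segment ℝ x y, z ∈ v := by
    intro y hy z hz
    obtain ⟨a, b, ha, hb, hab, rfl⟩ := hz
    rw [← hvc.isClosed.closure_eq, Metric.mem_closure_iff_infDist_zero hvne]
    refine le_antisymm ?_ Metric.infDist_nonneg
    have main : ∀ ε > (0:ℝ), infDist (a • x + b • y) v ≤ 0 + ε := by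
      intro ε hε
      obtain ⟨N, hN⟩ := Metric.tendsto_atTop.mp h (ε/3) (by positivity)
      have hxN := mem_iInter.mp hx N
      obtain ⟨x', hx'mem, hxx'⟩ := Metric.mem_closure_iff.mp hxN (ε/3) (by positivity)
      simp only [mem_iUnion] at hx'mem
      obtain ⟨k, hk, hx'k⟩ := hx'mem
      have hHk : hausdorffDist (u k) v < ε/3 := by
        have := hN k hk
        rwa [Real.dist_eq, sub_zero, abs_of_nonneg hausdorffDist_nonneg] at this
      have hyd : infDist y (u k) ≤ hausdorffDist v (u k) :=
        infDist_le_hausdorffDist_of_mem hy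
          (by rw [EMetric.hausdorffEdist_comm]; exact hne k)
      obtain ⟨y', hy', hyy'⟩ := (huc k).exists_infDist_eq_dist (hune k) y
      have hyy'lt : dist y y' < ε/3 := by
        rw [← hyy']
        calc infDist y (u k) ≤ hausdorffDist v (u k) := hyd
          _ = hausdorffDist (u k) v := hausdorffDist_comm
          _ < ε/3 := hHk
      have hz' : a • x' + b • y' ∈ u k := hx'k.2 y' hy' ⟨a, b, ha, hb, hab, rfl⟩
      have h1 : infDist (a • x + b • y) v ≤
          infDist (a • x' + b • y') v + dist (a • x + b • y) (a • x' + b • y') :=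
        infDist_le_infDist_add_dist
      have h2 : infDist (a • x' + b • y') v ≤ hausdorffDist (u k) v :=
        infDist_le_hausdorffDist_of_mem hz' (hne k)
      have h3 : dist (a • x + b • y) (a • x' + b • y') ≤ dist x x' + dist y y' := by
        calc dist (a • x + b • y) (a • x' + b • y')
            ≤ dist (a • x) (a • x') + dist (b • y) (b • y') := dist_add_add_le _ _ _ _
          _ = |a| * dist x x' + |b| * dist y y' := by
              rw [dist_smul₀, dist_smul₀, Real.norm_eq_abs, Real.norm_eq_abs]
          _ ≤ 1 * dist x x' + 1 * dist y y' := by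
              have ha1 : |a| ≤ 1 := by rw [abs_of_nonneg ha]; linarith
              have hb1 : |b| ≤ 1 := by rw [abs_of_nonneg hb]; linarith
              gcongr
          _ = dist x x' + dist y y' := by ring
      linarith
    linarith [main 1 one_pos, le_of_forall_pos_le_add main]
  obtain ⟨y0, hy0⟩ := hvne
  have hxv : x ∈ v := key y0 hy0 x (left_mem_segment ℝ x y0)
  exact ⟨hxv, fun y hy z hz => key y hy z hz⟩

end
end

section
/- Let u_n, u be nonempty compact subsets of ℝ^m such that each u_n is connected. If u is the Kuratowski limit of u_n, then H(u_n, u) → 0 in the Hausdorff metric. -/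
open Metric Set MeasureTheory Filter

noncomputable section

/-- For connected nonempty compacts, Kuratowski convergence
implies Hausdorff convergence. -/
theorem kuratowski_imp_hausdorff_of_connected {m : ℕ}
    (u : ℕ → Set (Em m)) (v : Set (Em m))
    (hune : ∀ n, (u n).Nonempty) (huc : ∀ n, IsCompact (u n))
    (hconn : ∀ n, IsConnected (u n))
    (hvne : v.Nonempty) (hvc : IsCompact v)
    (hlim : KLiminf u = v ∧ KLimsup u = v) :
    Tendsto (fun n => hausdorffDist (u n) v) atTop (nhds 0) := by

  obtain ⟨hlinf, hlsup⟩ := hlim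
  obtain ⟨x₀, hx₀⟩ := hvne
  obtain ⟨R, hR0, hRv⟩ : ∃ R, 0 ≤ R ∧ v ⊆ closedBall x₀ R := by
    obtain ⟨R, hR⟩ := hvc.isBounded.subset_closedBall x₀
    exact ⟨max R 0, le_max_right _ _,
      hR.trans (closedBall_subset_closedBall (le_max_left _ _))⟩
  -- Claim A: points of v are eventually approximated by u n
  have claimA : ∀ ε > (0:ℝ), ∀ᶠ n in atTop, ∀ y ∈ v, ∃ z ∈ u n, dist y z ≤ ε := by
    intro ε hε
    have hcover : v ⊆ ⋃ x ∈ v, ball x (ε/2) := fun y hy =>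
      mem_biUnion hy (mem_ball_self (by linarith))
    obtain ⟨t, htv, htfin, hcov⟩ :=
      hvc.elim_finite_subcover_image (fun x _ => isOpen_ball) hcover
    have key : ∀ x ∈ t, ∀ᶠ n in atTop, ∃ z ∈ u n, dist x z < ε/2 := by
      intro x hxt
      have hxv : x ∈ v := htv hxt
      have : x ∈ KLiminf u := by rw [hlinf]; exact hxv
      obtain ⟨f, hf, hft⟩ := this
      have := (Metric.tendsto_atTop.1 hft) (ε/2) (by linarith)
      obtain ⟨N, hN⟩ := this
      filter_upwards [eventually_ge_atTop N] with n hn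
      exact ⟨f n, hf n, by have := hN n hn; rw [dist_comm]; exact this⟩
    have := (Set.Finite.eventually_all htfin).2 key
    filter_upwards [this] with n hn y hy
    obtain ⟨x, hxt, hyx⟩ := mem_iUnion₂.1 (hcov hy)
    obtain ⟨z, hz, hxz⟩ := hn x hxt
    refine ⟨z, hz, ?_⟩
    have h1 : dist y x < ε/2 := mem_ball.1 hyx
    calc dist y z ≤ dist y x + dist x z := dist_triangle _ _ _
      _ ≤ ε := by linarith
  -- Claim B: points of u n are eventually close to v
  have claimB : ∀ ε > (0:ℝ), ∀ᶠ n in atTop, ∀ y ∈ u n, ∃ z ∈ v, dist y z ≤ ε := by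
    by_contra hB
    push_neg at hB
    obtain ⟨ε, hε, hfreq⟩ := hB
    have hfreq' : ∃ᶠ n in atTop, ∃ y ∈ u n, ∀ z ∈ v, ε < dist y z := by
      refine hfreq.mono fun n hn => ?_
      exact hn
    have hnear : ∀ᶠ n in atTop, ∃ z ∈ u n, dist x₀ z ≤ 1 := by
      filter_upwards [claimA 1 one_pos] with n hn
      exact hn x₀ hx₀
    set r : ℝ := R + ε + 2 with hr
    have hpt : ∀ n, (∃ y ∈ u n, ∀ z ∈ v, ε < dist y z) → (∃ z ∈ u n, dist x₀ z ≤ 1) →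
        ∃ p ∈ u n, dist p x₀ ≤ r ∧ ∀ q ∈ v, ε ≤ dist p q := by
      intro n ⟨y, hyu, hyfar⟩ ⟨z, hzu, hznear⟩
      by_cases hcase : dist y x₀ ≤ r
      · exact ⟨y, hyu, hcase, fun q hq => (hyfar q hq).le⟩
      · push_neg at hcase
        have hgcont : ContinuousOn (fun p => dist p x₀) (u n) :=
          (continuous_dist.comp (Continuous.prodMk continuous_id continuous_const)).continuousOn
        have himg : IsPreconnected ((fun p => dist p x₀) '' (u n)) :=
          (hconn n).isPreconnected.image _ hgcont
        have hord := himg.ordConnected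
        have hz' : dist z x₀ ∈ (fun p => dist p x₀) '' (u n) := ⟨z, hzu, rfl⟩
        have hy' : dist y x₀ ∈ (fun p => dist p x₀) '' (u n) := ⟨y, hyu, rfl⟩
        have hzr : dist z x₀ ≤ r := by
          rw [dist_comm] at hznear; linarith [hznear]
        have hrmem : r ∈ (fun p => dist p x₀) '' (u n) :=
          hord.out hz' hy' ⟨hzr, hcase.le⟩
        obtain ⟨w, hwu, hwr⟩ := hrmem
        refine ⟨w, hwu, le_of_eq hwr, fun q hq => ?_⟩
        have hqR : dist q x₀ ≤ R := mem_closedBall.1 (hRv hq)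
        have hwr' : dist w x₀ = r := hwr
        have : dist w x₀ ≤ dist w q + dist q x₀ := dist_triangle _ _ _
        rw [hwr'] at this
        linarith
    have hcomb : ∃ᶠ n in atTop,
        ∃ p ∈ u n, dist p x₀ ≤ r ∧ ∀ q ∈ v, ε ≤ dist p q := by
      refine (hfreq'.and_eventually hnear).mono fun n hn => hpt n hn.1 hn.2
    obtain ⟨φ, hφ, hφp⟩ := Filter.extraction_of_frequently_atTop hcomb
    choose p hpu hpball hpfar using hφp
    have hpball' : ∀ k, p k ∈ closedBall x₀ r := fun k => mem_closedBall.2 (hpball k)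
    obtain ⟨a, haball, ψ, hψ, hψt⟩ :=
      (isCompact_closedBall x₀ r).tendsto_subseq hpball'
    have hav : a ∈ v := by
      rw [← hlsup]
      refine mem_iInter.2 fun n => ?_
      refine mem_closure_of_tendsto hψt ?_
      filter_upwards [eventually_ge_atTop n] with j hj
      refine mem_iUnion.2 ⟨φ (ψ j), mem_iUnion.2 ⟨?_, hpu (ψ j)⟩⟩
      exact le_trans hj (le_trans (hψ.le_apply) (hφ.le_apply))
    have hdist : Tendsto (fun j => dist (p (ψ j)) a) atTop (nhds 0) := by
      have := hψt
      rw [tendsto_iff_dist_tendsto_zero] at this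
      exact this
    have hle : ε ≤ (0:ℝ) := by
      refine le_of_tendsto_of_tendsto tendsto_const_nhds hdist ?_
      exact Filter.Eventually.of_forall fun j => hpfar (ψ j) a hav
    linarith
  -- combine
  rw [Metric.tendsto_atTop]
  intro ε hε
  obtain ⟨N, hN⟩ := Filter.eventually_atTop.1
    ((claimA (ε/2) (by linarith)).and (claimB (ε/2) (by linarith)))
  refine ⟨N, fun n hn => ?_⟩
  obtain ⟨hA, hB⟩ := hN n hn
  have hhd : hausdorffDist (u n) v ≤ ε/2 :=
    hausdorffDist_le_of_mem_dist (by linarith) hB hA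
  have h0 : (0:ℝ) ≤ hausdorffDist (u n) v := hausdorffDist_nonneg
  rw [Real.dist_eq, sub_zero, abs_of_nonneg h0]
  linarith

end
end

section
/- Every u ∈ F_B(ℝ^m)^p is p-mean left-continuous: for every ε > 0 there exists δ > 0 such that for all 0 ≤ h < δ, (∫_h^1 H([u]_α, [u]_{α−h})^p dα)^{1/p} < ε. -/
open Metric Set MeasureTheory Filter

noncomputable section

section AuxLemmas

variable {m : ℕ} {p : ℝ} {u : Em m → ℝ}

lemma acut_antitone (u : Em m → ℝ) {a b : ℝ} (hab : a ≤ b) : acut u b ⊆ acut u a :=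
  fun _ hx => le_trans hab hx

lemma acut_nonempty (hu : IsFuzzyBp p u) {a : ℝ} (ha : a ≤ 1) : (acut u a).Nonempty := by
  obtain ⟨x, hx⟩ := hu.normal
  exact ⟨x, by simpa [acut, hx] using ha⟩

lemma acut_edist_zero_ne_top (hu : IsFuzzyBp p u) {a : ℝ} (ha : a ∈ Ioc (0:ℝ) 1) :
    EMetric.hausdorffEdist (acut u a) ({0} : Set (Em m)) ≠ ⊤ :=
  Metric.hausdorffEdist_ne_top_of_nonempty_of_bounded (acut_nonempty hu ha.2)
    (Set.singleton_nonempty 0) (hu.compactCuts a ha).isBounded Bornology.isBounded_singleton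

lemma hdz_mono (hu : IsFuzzyBp p u) {a b : ℝ} (ha : a ∈ Ioc (0:ℝ) 1) (hb : b ∈ Ioc (0:ℝ) 1)
    (hab : a ≤ b) :
    hausdorffDist (acut u b) ({0} : Set (Em m)) ≤ hausdorffDist (acut u a) ({0} : Set (Em m)) := by
  apply hausdorffDist_le_of_infDist hausdorffDist_nonneg
  · intro x hx
    exact infDist_le_hausdorffDist_of_mem (acut_antitone u hab hx) (acut_edist_zero_ne_top hu ha)
  · intro x hx
    obtain ⟨y, hy⟩ := acut_nonempty hu hb.2
    calc infDist x (acut u b) ≤ dist x y := infDist_le_dist_of_mem hy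
      _ = dist y (0 : Em m) := by rw [Set.mem_singleton_iff.1 hx, dist_comm]
      _ = infDist y ({0} : Set (Em m)) := infDist_singleton.symm
      _ ≤ hausdorffDist (acut u a) ({0} : Set (Em m)) :=
          infDist_le_hausdorffDist_of_mem (acut_antitone u hab hy) (acut_edist_zero_ne_top hu ha)

lemma hd_le_sum (hu : IsFuzzyBp p u) {a b : ℝ} (ha : a ∈ Ioc (0:ℝ) 1) (hb : b ∈ Ioc (0:ℝ) 1) :
    hausdorffDist (acut u a) (acut u b) ≤
      hausdorffDist (acut u a) ({0} : Set (Em m)) + hausdorffDist (acut u b) ({0} : Set (Em m)) := by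
  calc hausdorffDist (acut u a) (acut u b)
      ≤ hausdorffDist (acut u a) ({0} : Set (Em m)) + hausdorffDist ({0} : Set (Em m)) (acut u b) :=
        hausdorffDist_triangle (acut_edist_zero_ne_top hu ha)
    _ = _ := by congr 1; exact hausdorffDist_comm

lemma add_rpow_le_two_rpow {a b q : ℝ} (ha : 0 ≤ a) (hb : 0 ≤ b) (hq : 0 ≤ q) :
    (a + b) ^ q ≤ 2 ^ q * (a ^ q + b ^ q) := by
  have hmax : 0 ≤ max a b := le_max_of_le_left ha
  calc (a + b) ^ q ≤ (2 * max a b) ^ q := by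
        apply Real.rpow_le_rpow (add_nonneg ha hb) _ hq
        rw [two_mul]
        exact add_le_add (le_max_left a b) (le_max_right a b)
    _ = 2 ^ q * (max a b) ^ q := Real.mul_rpow (by norm_num) hmax
    _ ≤ 2 ^ q * (a ^ q + b ^ q) := by
        apply mul_le_mul_of_nonneg_left _ (Real.rpow_nonneg (by norm_num) q)
        rcases max_cases a b with ⟨h1, _⟩ | ⟨h1, _⟩ <;> rw [h1]
        · exact le_add_of_nonneg_right (Real.rpow_nonneg hb q)
        · exact le_add_of_nonneg_left (Real.rpow_nonneg ha q)

lemma tendsto_hd_acut (hu : IsFuzzyBp p u) {α : ℝ} (hα : α ∈ Ioc (0:ℝ) 1) {h : ℕ → ℝ}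
    (h0 : ∀ n, 0 ≤ h n) (hlt : ∀ n, h n < α) (hten : Tendsto h atTop (nhds 0)) :
    Tendsto (fun n => hausdorffDist (acut u α) (acut u (α - h n))) atTop (nhds 0) := by
  rw [Metric.tendsto_atTop]
  intro ε hε
  have hαpos := hα.1
  set lvl : ℕ → ℝ := fun n => α - α / ((n : ℝ) + 2) with hlvl
  have hlvlmem : ∀ n, lvl n ∈ Ioc (0:ℝ) 1 := by
    intro n
    have hn2 : (1:ℝ) < (n:ℝ) + 2 := by
      have : (0:ℝ) ≤ (n:ℝ) := Nat.cast_nonneg n; linarith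
    constructor
    · have : α / ((n:ℝ) + 2) < α := div_lt_self hαpos hn2
      simp only [hlvl]; linarith
    · have : 0 ≤ α / ((n:ℝ) + 2) := by positivity
      simp only [hlvl]; linarith [hα.2]
  have hlvlmono : Monotone lvl := by
    intro i j hij
    have hij' : (i:ℝ) + 2 ≤ (j:ℝ) + 2 := by
      have : (i:ℝ) ≤ (j:ℝ) := Nat.cast_le.2 hij
      linarith
    have : α / ((j:ℝ) + 2) ≤ α / ((i:ℝ) + 2) := by
      apply div_le_div_of_nonneg_left hαpos.le (by positivity) hij'
    simp only [hlvl]; linarith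
  have hV : ∀ n, IsCompact (acut u (lvl n)) := fun n => hu.compactCuts _ (hlvlmem n)
  have hdir : Directed (· ⊇ ·) (fun n => acut u (lvl n)) := fun i j =>
    ⟨max i j, acut_antitone u (hlvlmono (le_max_left i j)),
      acut_antitone u (hlvlmono (le_max_right i j))⟩
  have hKsub : (⋂ n, acut u (lvl n)) ⊆ acut u α := by
    intro x hx
    simp only [Set.mem_iInter] at hx
    have h1 : Tendsto (fun n : ℕ => α / ((n:ℝ) + 2)) atTop (nhds 0) := by
      have h2 := (tendsto_const_div_atTop_nhds_zero_nat α).comp (tendsto_add_atTop_nat 2)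
      refine h2.congr fun n => ?_
      show α / ((n + 2 : ℕ) : ℝ) = α / ((n:ℝ) + 2)
      push_cast
      ring
    have hlim : Tendsto lvl atTop (nhds α) := by
      simpa using tendsto_const_nhds.sub h1
    exact le_of_tendsto' hlim fun n => hx n
  obtain ⟨i, hVi⟩ := exists_subset_nhds_of_isCompact' hdir hV (fun n => (hV n).isClosed)
    (fun x hx => (isOpen_thickening).mem_nhds (self_subset_thickening (half_pos hε) _ (hKsub hx)))
  have hpos : 0 < α / ((i:ℝ) + 2) := by positivity
  rw [Metric.tendsto_atTop] at hten
  obtain ⟨N, hN⟩ := hten _ hpos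
  refine ⟨N, fun n hn => ?_⟩
  have hhn : h n < α / ((i:ℝ) + 2) := by
    have := hN n hn
    rwa [Real.dist_eq, sub_zero, abs_of_nonneg (h0 n)] at this
  have hsub2 : acut u (α - h n) ⊆ thickening (ε/2) (acut u α) := by
    refine subset_trans (acut_antitone u ?_) hVi
    simp only [hlvl]; linarith
  have hd : hausdorffDist (acut u α) (acut u (α - h n)) ≤ ε/2 := by
    apply hausdorffDist_le_of_infDist (le_of_lt (half_pos hε))
    · intro x hx
      have hx' : x ∈ acut u (α - h n) := acut_antitone u (by linarith [h0 n]) hx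
      simp [infDist_zero_of_mem hx']
      positivity
    · intro x hx
      obtain ⟨z, hz, hdz⟩ := mem_thickening_iff.1 (hsub2 hx)
      exact le_trans (infDist_le_dist_of_mem hz) hdz.le
  rw [Real.dist_eq, sub_zero, abs_of_nonneg hausdorffDist_nonneg]
  linarith

end AuxLemmas

/-- Every element of `F_B(ℝ^m)^p` is p-mean left-continuous. -/
theorem p_mean_left_continuous {m : ℕ} (p : ℝ) (hp : 1 ≤ p)
    (u : Em m → ℝ) (hu : IsFuzzyBp p u) :
    ∀ ε > (0:ℝ), ∃ δ > (0:ℝ), ∀ h : ℝ, 0 ≤ h → h < δ →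
      (∫ a in Ioc h 1, hausdorffDist (acut u a) (acut u (a - h)) ^ p) ^ (1/p) < ε := by
  intro ε hε
  have hp0 : (0:ℝ) < p := lt_of_lt_of_le one_pos hp
  have hpne : p ≠ 0 := ne_of_gt hp0
  set Hp : ℝ → ℝ := fun a => hausdorffDist (acut u a) ({0} : Set (Em m)) ^ p with hHpdef
  have hHpint : IntegrableOn Hp (Ioc (0:ℝ) 1) := hu.lp
  have hHpnn : ∀ a, 0 ≤ Hp a := fun a => Real.rpow_nonneg hausdorffDist_nonneg p
  set E := ε ^ p with hEdef
  have hEpos : 0 < E := Real.rpow_pos_of_pos hε p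
  set c := (2:ℝ) ^ p with hcdef
  have hcpos : 0 < c := Real.rpow_pos_of_pos two_pos p
  set κ := E / (4 * c) with hκdef
  have hκpos : 0 < κ := by positivity
  -- choose the cutoff point η'
  obtain ⟨k, hk⟩ : ∃ k : ℕ, ∫ a in Ioc (0:ℝ) (1/((k:ℝ)+1)), Hp a < κ := by
    set s : ℕ → Set ℝ := fun k => Ioc (1/((k:ℝ)+1)) 1 with hsdef
    have hsm : Monotone s := by
      intro i j hij
      apply Ioc_subset_Ioc_left
      have : (i:ℝ) ≤ (j:ℝ) := Nat.cast_le.2 hij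
      apply div_le_div_of_nonneg_left one_pos.le (by positivity) (by linarith)
    have hsU : (⋃ k, s k) = Ioc (0:ℝ) 1 := by
      ext x
      simp only [hsdef, Set.mem_iUnion, mem_Ioc]
      constructor
      · rintro ⟨k, hk1, hk2⟩
        exact ⟨lt_trans (by positivity) hk1, hk2⟩
      · rintro ⟨hx1, hx2⟩
        obtain ⟨n, hn⟩ := exists_nat_one_div_lt hx1
        exact ⟨n, hn, hx2⟩
    have htend := tendsto_setIntegral_of_monotone (fun i => measurableSet_Ioc) hsm
      (hsU ▸ hHpint)
    rw [hsU] at htend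
    have hsplitk : ∀ k : ℕ, ∫ a in Ioc (0:ℝ) 1, Hp a
        = (∫ a in Ioc (0:ℝ) (1/((k:ℝ)+1)), Hp a) + ∫ a in s k, Hp a := by
      intro k
      have h01 : (0:ℝ) ≤ 1/((k:ℝ)+1) := by positivity
      have h11 : 1/((k:ℝ)+1) ≤ 1 := by
        rw [div_le_one (by positivity)]
        linarith [(Nat.cast_nonneg k : (0:ℝ) ≤ (k:ℝ))]
      rw [← Ioc_union_Ioc_eq_Ioc h01 h11,
        setIntegral_union (Ioc_disjoint_Ioc_of_le le_rfl) measurableSet_Ioc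
          (hHpint.mono_set (Ioc_subset_Ioc le_rfl h11))
          (hHpint.mono_set (Ioc_subset_Ioc h01 le_rfl))]
    have htend2 : Tendsto (fun k : ℕ => ∫ a in Ioc (0:ℝ) (1/((k:ℝ)+1)), Hp a) atTop (nhds 0) := by
      have h2 := htend.const_sub (∫ a in Ioc (0:ℝ) 1, Hp a)
      rw [sub_self] at h2
      exact h2.congr fun k => by rw [hsplitk k]; ring
    exact (htend2.eventually_lt_const hκpos).exists
  set η' := 1/((k:ℝ)+1) with hη'def
  have hη'pos : 0 < η' := by positivity
  have hη'le1 : η' ≤ 1 := by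
    rw [hη'def, div_le_one (by positivity)]
    linarith [(Nat.cast_nonneg k : (0:ℝ) ≤ (k:ℝ))]
  set η := η'/2 with hηdef
  have hηpos : 0 < η := by positivity
  by_contra hcon
  push_neg at hcon
  have hsel : ∀ n : ℕ, ∃ h : ℝ, 0 ≤ h ∧ h < min η (1/((n:ℝ)+1)) ∧
      ε ≤ (∫ a in Ioc h 1, hausdorffDist (acut u a) (acut u (a - h)) ^ p) ^ (1/p) := by
    intro n
    obtain ⟨h, h1, h2, h3⟩ := hcon (min η (1/((n:ℝ)+1))) (lt_min hηpos (by positivity))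
    exact ⟨h, h1, h2, h3⟩
  choose hs hs0 hslt hsε using hsel
  have hsη : ∀ n, hs n < η := fun n => lt_of_lt_of_le (hslt n) (min_le_left _ _)
  have hsη' : ∀ n, hs n ≤ η' := fun n => le_of_lt (lt_of_lt_of_le (hsη n) (by linarith))
  have hstend : Tendsto hs atTop (nhds 0) := by
    apply squeeze_zero hs0 (fun n => ((hslt n).le.trans (min_le_right _ _)))
    exact tendsto_one_div_add_atTop_nhds_zero_nat
  set F : ℝ → ℝ → ℝ := fun h a => hausdorffDist (acut u a) (acut u (a - h)) ^ p with hFdef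
  have hFnn : ∀ h a, 0 ≤ F h a := fun h a => Real.rpow_nonneg hausdorffDist_nonneg p
  set G : ℕ → ℝ := fun n => ∫ a in Ioc (hs n) 1, F (hs n) a with hGdef
  have hGE : ∀ n, E ≤ G n := by
    intro n
    have h1 := hsε n
    have hGnn : 0 ≤ G n := integral_nonneg fun a => hFnn _ a
    have h2 : ε ^ p ≤ (G n ^ (1/p)) ^ p := Real.rpow_le_rpow hε.le h1 hp0.le
    rw [← Real.rpow_mul hGnn, one_div_mul_cancel hpne, Real.rpow_one] at h2
    rw [hEdef]
    exact h2
  have hFint : ∀ n, IntegrableOn (F (hs n)) (Ioc (hs n) 1) := by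
    intro n
    by_contra hni
    have hz : G n = 0 := integral_undef hni
    have := hGE n
    rw [hz] at this
    linarith
  have hsplit : ∀ n, G n = (∫ a in Ioc (hs n) η', F (hs n) a) + ∫ a in Ioc η' 1, F (hs n) a := by
    intro n
    rw [hGdef]
    dsimp only
    rw [← Ioc_union_Ioc_eq_Ioc (hsη' n) hη'le1,
      setIntegral_union (Ioc_disjoint_Ioc_of_le le_rfl) measurableSet_Ioc
        ((hFint n).mono_set (Ioc_subset_Ioc_right hη'le1))
        ((hFint n).mono_set (Ioc_subset_Ioc_left (hsη' n)))]
  have hI0 : (∫ a in Ioc (0:ℝ) η', Hp a) < κ := hk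
  have hAbound : ∀ n, (∫ a in Ioc (hs n) η', F (hs n) a) < E/2 := by
    intro n
    have hh0 := hs0 n
    have hhη' : hs n < η' := lt_of_lt_of_le (hsη n) (by linarith)
    have int1 : IntegrableOn Hp (Ioc (hs n) η') := hHpint.mono_set (Ioc_subset_Ioc hh0 hη'le1)
    have intTrans : IntegrableOn Hp (Ioc (0:ℝ) (η' - hs n)) :=
      hHpint.mono_set (Ioc_subset_Ioc le_rfl (by linarith))
    have hiv : IntervalIntegrable Hp volume 0 (η' - hs n) := by
      rw [intervalIntegrable_iff, uIoc_of_le (by linarith : (0:ℝ) ≤ η' - hs n)]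
      exact intTrans
    have int2 : IntegrableOn (fun a => Hp (a - hs n)) (Ioc (hs n) η') := by
      have h2 := hiv.comp_sub_right (hs n)
      rw [intervalIntegrable_iff] at h2
      rw [zero_add, sub_add_cancel, uIoc_of_le hhη'.le] at h2
      exact h2
    have eq2 : (∫ a in Ioc (hs n) η', Hp (a - hs n)) = ∫ a in Ioc (0:ℝ) (η' - hs n), Hp a := by
      rw [← intervalIntegral.integral_of_le hhη'.le,
        ← intervalIntegral.integral_of_le (by linarith : (0:ℝ) ≤ η' - hs n),
        intervalIntegral.integral_comp_sub_right Hp (hs n), sub_self]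
    have le1 : (∫ a in Ioc (hs n) η', Hp a) ≤ ∫ a in Ioc (0:ℝ) η', Hp a :=
      setIntegral_mono_set (hHpint.mono_set (Ioc_subset_Ioc le_rfl hη'le1))
        (Filter.Eventually.of_forall fun a => hHpnn a)
        (HasSubset.Subset.eventuallyLE (Ioc_subset_Ioc_left hh0))
    have le2 : (∫ a in Ioc (0:ℝ) (η' - hs n), Hp a) ≤ ∫ a in Ioc (0:ℝ) η', Hp a :=
      setIntegral_mono_set (hHpint.mono_set (Ioc_subset_Ioc le_rfl hη'le1))
        (Filter.Eventually.of_forall fun a => hHpnn a)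
        (HasSubset.Subset.eventuallyLE (Ioc_subset_Ioc_right (by linarith)))
    have pw : ∀ a ∈ Ioc (hs n) η', F (hs n) a ≤ c * (Hp a + Hp (a - hs n)) := by
      intro a ha
      have ha01 : a ∈ Ioc (0:ℝ) 1 := ⟨lt_of_le_of_lt hh0 ha.1, ha.2.trans hη'le1⟩
      have hah01 : a - hs n ∈ Ioc (0:ℝ) 1 := ⟨by linarith [ha.1], by linarith [ha01.2]⟩
      calc F (hs n) a
          ≤ (hausdorffDist (acut u a) ({0} : Set (Em m))
              + hausdorffDist (acut u (a - hs n)) ({0} : Set (Em m))) ^ p :=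
            Real.rpow_le_rpow hausdorffDist_nonneg (hd_le_sum hu ha01 hah01) hp0.le
        _ ≤ c * (Hp a + Hp (a - hs n)) :=
            add_rpow_le_two_rpow hausdorffDist_nonneg hausdorffDist_nonneg hp0.le
    calc (∫ a in Ioc (hs n) η', F (hs n) a)
        ≤ ∫ a in Ioc (hs n) η', c * (Hp a + Hp (a - hs n)) :=
          setIntegral_mono_on ((hFint n).mono_set (Ioc_subset_Ioc_right hη'le1))
            ((int1.add int2).const_mul c) measurableSet_Ioc pw
      _ = c * ((∫ a in Ioc (hs n) η', Hp a) + ∫ a in Ioc (hs n) η', Hp (a - hs n)) := by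
          rw [integral_const_mul, integral_add int1 int2]
      _ ≤ c * ((∫ a in Ioc (0:ℝ) η', Hp a) + ∫ a in Ioc (0:ℝ) η', Hp a) := by
          apply mul_le_mul_of_nonneg_left _ hcpos.le
          exact add_le_add le1 (by rw [eq2]; exact le2)
      _ = 2 * c * (∫ a in Ioc (0:ℝ) η', Hp a) := by ring
      _ < 2 * c * κ := by
          exact (mul_lt_mul_iff_right₀ (by positivity)).2 hI0
      _ = E / 2 := by
          rw [hκdef]
          field_simp
          ring
  have hTgt : ∀ n, E/2 < ∫ a in Ioc η' 1, F (hs n) a := by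
    intro n
    have h1 := hGE n
    have h2 := hsplit n
    have h3 := hAbound n
    linarith
  have hη01 : η ∈ Ioc (0:ℝ) 1 := ⟨hηpos, by linarith⟩
  have hTto : Tendsto (fun n => ∫ a in Ioc η' 1, F (hs n) a) atTop (nhds 0) := by
    have hmeas : ∀ n, AEStronglyMeasurable (F (hs n)) (volume.restrict (Ioc η' 1)) :=
      fun n => ((hFint n).mono_set (Ioc_subset_Ioc_left (hsη' n))).aestronglyMeasurable
    have hbint : Integrable (fun _ : ℝ =>
        (2 * hausdorffDist (acut u η) ({0} : Set (Em m))) ^ p)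
        (volume.restrict (Ioc η' 1)) :=
      integrableOn_const measure_Ioc_lt_top.ne
    have hbound : ∀ n, ∀ᵐ a ∂(volume.restrict (Ioc η' 1)),
        ‖F (hs n) a‖ ≤ (2 * hausdorffDist (acut u η) ({0} : Set (Em m))) ^ p := by
      intro n
      refine (ae_restrict_iff' measurableSet_Ioc).2 (Filter.Eventually.of_forall fun a ha => ?_)
      have ha01 : a ∈ Ioc (0:ℝ) 1 := ⟨lt_trans hη'pos ha.1, ha.2⟩
      have hah01 : a - hs n ∈ Ioc (0:ℝ) 1 :=
        ⟨by linarith [ha.1, hsη n], by linarith [hs0 n, ha.2]⟩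
      rw [Real.norm_of_nonneg (hFnn _ _)]
      apply Real.rpow_le_rpow hausdorffDist_nonneg _ hp0.le
      have t1 : hausdorffDist (acut u a) ({0} : Set (Em m))
          ≤ hausdorffDist (acut u η) ({0} : Set (Em m)) :=
        hdz_mono hu hη01 ha01 (by linarith [ha.1])
      have t2 : hausdorffDist (acut u (a - hs n)) ({0} : Set (Em m))
          ≤ hausdorffDist (acut u η) ({0} : Set (Em m)) :=
        hdz_mono hu hη01 hah01 (by linarith [ha.1, hsη n])
      calc hausdorffDist (acut u a) (acut u (a - hs n))
          ≤ hausdorffDist (acut u a) ({0} : Set (Em m))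
            + hausdorffDist (acut u (a - hs n)) ({0} : Set (Em m)) := hd_le_sum hu ha01 hah01
        _ ≤ 2 * hausdorffDist (acut u η) ({0} : Set (Em m)) := by linarith
    have hlim : ∀ᵐ a ∂(volume.restrict (Ioc η' 1)),
        Tendsto (fun n => F (hs n) a) atTop (nhds ((fun _ : ℝ => (0:ℝ)) a)) := by
      refine (ae_restrict_iff' measurableSet_Ioc).2 (Filter.Eventually.of_forall fun a ha => ?_)
      have ha01 : a ∈ Ioc (0:ℝ) 1 := ⟨lt_trans hη'pos ha.1, ha.2⟩
      have hdist := tendsto_hd_acut hu ha01 hs0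
        (fun n => lt_trans (hsη n) (by linarith [ha.1] : η < a)) hstend
      have hcont : ContinuousAt (fun x : ℝ => x ^ p) 0 :=
        Real.continuousAt_rpow_const 0 p (Or.inr hp0.le)
      have h3 := hcont.tendsto.comp hdist
      simp only [Real.zero_rpow hpne] at h3
      exact h3
    have h4 := tendsto_integral_of_dominated_convergence _ hmeas hbint hbound hlim
    simpa using h4
  obtain ⟨n, hn⟩ := (hTto.eventually_lt_const (half_pos hEpos)).exists
  exact absurd (hTgt n) (not_lt.2 hn.le)

end
end
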